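/- Let b(k) = \sum_{i=0}^{\lceil k/2 \rceil} \binom{k}{2i-1} 2^{k-i} (with the convention \binom{k}{-1} = 0). Then b satisfies the recurrence b(k) = 4·b(k-1) − 2·b(k-2) for all k ≥ 2, with b(0) = 0 and b(1) = 1. -/

import Mathlib

open Finset Zsqrtd

/-- b(k) = ∑_{i=0}^{⌈k/2⌉} C(k, 2i-1) · 2^{k-i}, with the convention C(k,-1) = 0
(realised by the `if i = 0` clause). -/
noncomputable def b (k : ℕ) : ℤ :=
  ∑ i ∈ Finset.range ((k + 1) / 2 + 1),
    if i = 0 then 0 else (Nat.choose k (2 * i - 1) : ℤ) * 2 ^ (k - i)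

private def imHom : ℤ√2 →+ ℤ where
  toFun := Zsqrtd.im
  map_zero' := rfl
  map_add' _ _ := rfl

private lemma even_pow (i : ℕ) : (sqrtd : ℤ√2) ^ (2 * i) = ((2 ^ i : ℤ) : ℤ√2) := by
  rw [pow_mul, sq, dmuld]; push_cast; ring

private lemma odd_pow_im (i : ℕ) : ((sqrtd : ℤ√2) ^ (2 * i + 1)).im = 2 ^ i := by
  rw [pow_succ, even_pow, im_mul, re_intCast, im_intCast, re_sqrtd, im_sqrtd]; ring

private lemma key (k : ℕ) : b k = ((sqrtd + 2 : ℤ√2) ^ k).im := by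
  have expand : (sqrtd + 2 : ℤ√2) ^ k
      = ∑ j ∈ range (k + 1), sqrtd ^ j * 2 ^ (k - j) * (Nat.choose k j : ℤ√2) :=
    add_pow _ _ _
  have him : ((sqrtd + 2 : ℤ√2) ^ k).im
      = ∑ j ∈ range (k + 1), ((sqrtd : ℤ√2) ^ j).im * (2 ^ (k - j) * (Nat.choose k j : ℤ)) := by
    rw [expand]
    calc (∑ j ∈ range (k + 1), sqrtd ^ j * 2 ^ (k - j) * (Nat.choose k j : ℤ√2)).im
        = ∑ j ∈ range (k + 1), imHom (sqrtd ^ j * 2 ^ (k - j) * (Nat.choose k j : ℤ√2)) :=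
          map_sum imHom _ _
      _ = ∑ j ∈ range (k + 1), ((sqrtd : ℤ√2) ^ j).im * (2 ^ (k - j) * (Nat.choose k j : ℤ)) := by
          refine Finset.sum_congr rfl fun j _ => ?_
          have h1 : (sqrtd ^ j * 2 ^ (k - j) * (Nat.choose k j : ℤ√2))
              = sqrtd ^ j * (((2 ^ (k - j) * (Nat.choose k j : ℤ)) : ℤ) : ℤ√2) := by
            push_cast; ring
          show (sqrtd ^ j * 2 ^ (k - j) * (Nat.choose k j : ℤ√2)).im = _
          rw [h1, im_mul, re_intCast, im_intCast]; ring
  rw [him]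
  rw [← Finset.sum_filter_of_ne (p := fun j => j % 2 = 1)
      (f := fun j => ((sqrtd : ℤ√2) ^ j).im * (2 ^ (k - j) * (Nat.choose k j : ℤ)))
      (by
        intro j _ hne
        by_contra h
        apply hne
        obtain ⟨i, rfl⟩ : ∃ i, j = 2 * i := ⟨j / 2, by omega⟩
        simp only [even_pow, im_intCast, zero_mul])]
  -- now reindex
  rw [show b k = ∑ i ∈ range ((k + 1) / 2), (Nat.choose k (2 * (i + 1) - 1) : ℤ) * 2 ^ (k - (i + 1)) by
    unfold b
    rw [Finset.sum_range_succ']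
    simp]
  refine Finset.sum_nbij' (i := fun i => 2 * i + 1) (j := fun j => j / 2) ?_ ?_ ?_ ?_ ?_
  · intro i hi
    simp only [Finset.mem_filter, Finset.mem_range] at *
    omega
  · intro j hj
    simp only [Finset.mem_filter, Finset.mem_range] at *
    omega
  · intro i _; show (2 * i + 1) / 2 = i; omega
  · intro j hj
    simp only [Finset.mem_filter, Finset.mem_range] at hj
    show 2 * (j / 2) + 1 = j
    omega
  · intro i hi
    simp only [Finset.mem_range] at hi
    rw [odd_pow_im]
    have h1 : 2 * (i + 1) - 1 = 2 * i + 1 := by omega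
    have h2 : (2:ℤ) ^ i * 2 ^ (k - (2 * i + 1)) = 2 ^ (k - (i + 1)) := by
      rw [← pow_add]
      congr 1
      omega
    rw [h1, ← h2]; ring

theorem b_recurrence :
    (∀ k : ℕ, 2 ≤ k → b k = 4 * b (k - 1) - 2 * b (k - 2)) ∧ b 0 = 0 ∧ b 1 = 1 := by
  refine ⟨?_, by simp [b], by norm_num [b, Finset.sum_range_succ]⟩
  intro k hk
  obtain ⟨n, rfl⟩ : ∃ n, k = n + 2 := ⟨k - 2, by omega⟩
  have hα : (sqrtd + 2 : ℤ√2) ^ 2 = 4 * (sqrtd + 2) - 2 := by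
    have : (sqrtd : ℤ√2) * sqrtd = 2 := dmuld
    ring_nf
    rw [sq, this]
    ring
  have : (sqrtd + 2 : ℤ√2) ^ (n + 2) = 4 * (sqrtd + 2) ^ (n + 1) - 2 * (sqrtd + 2) ^ n := by
    rw [pow_add, hα]
    ring
  simp only [show n + 2 - 1 = n + 1 from rfl, show n + 2 - 2 = n from rfl]
  rw [key, key, key, this]
  rw [im_sub, im_mul, im_mul]
  simp [re_intCast, im_intCast]
  try ring
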